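/- arXiv:1009.2998 — 5 statements merged into one kernel-verified Lean document; each statement's English description precedes it below -/
import Mathlib

section
/- Let G ⊂ ℝ² be an open set and N : G → ℝ a continuously differentiable function such that the function H(x,y) = ∂ₓN(x,y)·P(x,y) + ∂ᵧN(x,y)·Q(x,y) is strictly positive on G. Then the planar system x' = P(x,y), y' = Q(x,y) has no nonconstant periodic solutions with trajectory contained in G. -/
/-- Poincaré test: if H = ∂ₓN·P + ∂ᵧN·Q is strictly positive on an open set G,
the planar system x' = P, y' = Q has no nonconstant periodic solutions in G. -/
theorem poincare_test_no_periodic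
    (G : Set (ℝ × ℝ)) (hG : IsOpen G)
    (P Q N : ℝ × ℝ → ℝ)
    (hP : ContDiffOn ℝ 1 P G) (hQ : ContDiffOn ℝ 1 Q G)
    (hN : ContDiffOn ℝ 1 N G)
    (hH : ∀ p ∈ G, 0 < fderiv ℝ N p (1, 0) * P p + fderiv ℝ N p (0, 1) * Q p) :
    ¬ ∃ (x y : ℝ → ℝ) (T : ℝ), 0 < T ∧
      (∀ t, (x t, y t) ∈ G) ∧
      (∀ t, HasDerivAt x (P (x t, y t)) t) ∧
      (∀ t, HasDerivAt y (Q (x t, y t)) t) ∧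
      (∀ t, (x (t + T), y (t + T)) = (x t, y t)) ∧
      (∃ t s, (x t, y t) ≠ (x s, y s)) := by
  rintro ⟨x, y, T, hT, hmem, hx, hy, hper, -⟩
  set f : ℝ → ℝ := fun t => N (x t, y t) with hf
  have hderiv : ∀ t : ℝ, HasDerivAt f
      (fderiv ℝ N (x t, y t) (1, 0) * P (x t, y t)
        + fderiv ℝ N (x t, y t) (0, 1) * Q (x t, y t)) t := by
    intro t
    set p := (x t, y t) with hp
    have hNd : DifferentiableAt ℝ N p :=
      (hN.differentiableOn one_ne_zero).differentiableAt (hG.mem_nhds (hmem t))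
    have hc : HasDerivAt (fun s => (x s, y s)) (P p, Q p) t := (hx t).prodMk (hy t)
    have := hNd.hasFDerivAt.comp_hasDerivAt t hc
    have hvec : (P p, Q p) = P p • ((1 : ℝ), (0 : ℝ)) + Q p • ((0 : ℝ), (1 : ℝ)) := by
      simp [Prod.ext_iff]
    have heq : (fderiv ℝ N p) (P p, Q p)
        = fderiv ℝ N p (1, 0) * P p + fderiv ℝ N p (0, 1) * Q p := by
      rw [hvec, map_add, map_smul, map_smul]
      simp [mul_comm]
    rw [heq] at this
    exact this
  have hmono : StrictMono f :=
    strictMono_of_hasDerivAt_pos hderiv fun t => hH _ (hmem t)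
  have hfeq : f (0 + T) = f 0 := congrArg N (hper 0)
  have : f 0 < f (0 + T) := hmono (by linarith)
  linarith
end

section
/- For the vector field f(x) = (−x₁ − x₂ + x₁g(x), x₁ − x₂ + x₂g(x), −x₃ − x₄ + x₃g(x), x₃ − x₄ + x₄g(x)) on ℝ⁴, with g(x) = x₁² + x₂² + x₃² + x₄², and the function μ(x) = g(x)^{−3} on G' = ℝ⁴ ∖ {0}, the divergence of the vector field M(x) = μ(x)f(x) equals 2/(x₁² + x₂² + x₃² + x₄²)³ > 0 for all x ∈ G'. -/
set_option maxHeartbeats 1000000 in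
/-- The divergence of M = g⁻³·f on ℝ⁴ ∖ {0} equals 2/(x₁²+x₂²+x₃²+x₄²)³ > 0. -/
theorem example_divergence_mu_f
    (g : (Fin 4 → ℝ) → ℝ) (hg : g = fun x => x 0 ^ 2 + x 1 ^ 2 + x 2 ^ 2 + x 3 ^ 2)
    (f : (Fin 4 → ℝ) → (Fin 4 → ℝ))
    (hf : ∀ x, f x = ![ -x 0 - x 1 + x 0 * g x,
                        x 0 - x 1 + x 1 * g x,
                        -x 2 - x 3 + x 2 * g x,
                        x 2 - x 3 + x 3 * g x ])
    (M : (Fin 4 → ℝ) → (Fin 4 → ℝ)) (hM : ∀ x, M x = (g x)⁻¹ ^ 3 • f x) :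
    ∀ x : Fin 4 → ℝ, x ≠ 0 →
      (∑ i, fderiv ℝ (fun y => M y i) x (Pi.single i 1))
        = 2 / (x 0 ^ 2 + x 1 ^ 2 + x 2 ^ 2 + x 3 ^ 2) ^ 3 ∧
      0 < ∑ i, fderiv ℝ (fun y => M y i) x (Pi.single i 1) := by
  intro x hx
  have hS : 0 < x 0 ^ 2 + x 1 ^ 2 + x 2 ^ 2 + x 3 ^ 2 := by
    obtain ⟨i, hi⟩ := Function.ne_iff.mp hx
    simp only [Pi.zero_apply] at hi
    fin_cases i <;> positivity
  have hSne : x 0 ^ 2 + x 1 ^ 2 + x 2 ^ 2 + x 3 ^ 2 ≠ 0 := hS.ne'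
  have hne : x 0 * x 0 + x 1 * x 1 + x 2 * x 2 + x 3 * x 3 ≠ 0 := by
    intro h; exact hSne (by rw [← h]; ring)
  have hp : ∀ j : Fin 4, HasFDerivAt (fun y : Fin 4 → ℝ => y j)
      ((ContinuousLinearMap.proj j : (Fin 4 → ℝ) →L[ℝ] ℝ)) x := fun j => hasFDerivAt_apply j x
  have hs : HasFDerivAt (fun y : Fin 4 → ℝ => y 0 * y 0 + y 1 * y 1 + y 2 * y 2 + y 3 * y 3)
      _ x := ((((hp 0).mul (hp 0)).add ((hp 1).mul (hp 1))).add ((hp 2).mul (hp 2))).add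
        ((hp 3).mul (hp 3))
  have hinv : HasFDerivAt (fun y : Fin 4 → ℝ =>
      (y 0 * y 0 + y 1 * y 1 + y 2 * y 2 + y 3 * y 3)⁻¹) _ x :=
    (hasFDerivAt_inv' (𝕜 := ℝ) hne).comp x hs
  have hcube := (hinv.mul hinv).mul hinv
  have hF0 := hcube.mul (((hp 0).neg.sub (hp 1)).add ((hp 0).mul hs))
  have hF1 := hcube.mul (((hp 0).sub (hp 1)).add ((hp 1).mul hs))
  have hF2 := hcube.mul (((hp 2).neg.sub (hp 3)).add ((hp 2).mul hs))
  have hF3 := hcube.mul (((hp 2).sub (hp 3)).add ((hp 3).mul hs))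
  have p0 : (Pi.single (0:Fin 4) (1:ℝ)) = ![1,0,0,0] := by
    funext j; fin_cases j <;> simp
  have p1 : (Pi.single (1:Fin 4) (1:ℝ)) = ![0,1,0,0] := by
    funext j; fin_cases j <;> simp
  have p2 : (Pi.single (2:Fin 4) (1:ℝ)) = ![0,0,1,0] := by
    funext j; fin_cases j <;> simp
  have p3 : (Pi.single (3:Fin 4) (1:ℝ)) = ![0,0,0,1] := by
    funext j; fin_cases j <;> simp
  have e0 : (fun y => M y 0) = (fun y : Fin 4 → ℝ =>
      (y 0 * y 0 + y 1 * y 1 + y 2 * y 2 + y 3 * y 3)⁻¹ * (y 0 * y 0 + y 1 * y 1 + y 2 * y 2 + y 3 * y 3)⁻¹ * (y 0 * y 0 + y 1 * y 1 + y 2 * y 2 + y 3 * y 3)⁻¹ *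
        (-y 0 - y 1 + y 0 * (y 0 * y 0 + y 1 * y 1 + y 2 * y 2 + y 3 * y 3))) := by
    funext y
    simp only [hM, hf, hg, Pi.smul_apply, smul_eq_mul, Matrix.cons_val_zero, Matrix.cons_val_one, Matrix.head_cons, Matrix.cons_val_two, Matrix.tail_cons, Matrix.cons_val_three]
    ring
  have e1 : (fun y => M y 1) = (fun y : Fin 4 → ℝ =>
      (y 0 * y 0 + y 1 * y 1 + y 2 * y 2 + y 3 * y 3)⁻¹ * (y 0 * y 0 + y 1 * y 1 + y 2 * y 2 + y 3 * y 3)⁻¹ * (y 0 * y 0 + y 1 * y 1 + y 2 * y 2 + y 3 * y 3)⁻¹ *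
        (y 0 - y 1 + y 1 * (y 0 * y 0 + y 1 * y 1 + y 2 * y 2 + y 3 * y 3))) := by
    funext y
    simp only [hM, hf, hg, Pi.smul_apply, smul_eq_mul, Matrix.cons_val_zero, Matrix.cons_val_one, Matrix.head_cons, Matrix.cons_val_two, Matrix.tail_cons, Matrix.cons_val_three]
    ring
  have e2 : (fun y => M y 2) = (fun y : Fin 4 → ℝ =>
      (y 0 * y 0 + y 1 * y 1 + y 2 * y 2 + y 3 * y 3)⁻¹ * (y 0 * y 0 + y 1 * y 1 + y 2 * y 2 + y 3 * y 3)⁻¹ * (y 0 * y 0 + y 1 * y 1 + y 2 * y 2 + y 3 * y 3)⁻¹ *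
        (-y 2 - y 3 + y 2 * (y 0 * y 0 + y 1 * y 1 + y 2 * y 2 + y 3 * y 3))) := by
    funext y
    simp only [hM, hf, hg, Pi.smul_apply, smul_eq_mul, Matrix.cons_val_zero, Matrix.cons_val_one, Matrix.head_cons, Matrix.cons_val_two, Matrix.tail_cons, Matrix.cons_val_three]
    ring
  have e3 : (fun y => M y 3) = (fun y : Fin 4 → ℝ =>
      (y 0 * y 0 + y 1 * y 1 + y 2 * y 2 + y 3 * y 3)⁻¹ * (y 0 * y 0 + y 1 * y 1 + y 2 * y 2 + y 3 * y 3)⁻¹ * (y 0 * y 0 + y 1 * y 1 + y 2 * y 2 + y 3 * y 3)⁻¹ *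
        (y 2 - y 3 + y 3 * (y 0 * y 0 + y 1 * y 1 + y 2 * y 2 + y 3 * y 3))) := by
    funext y
    simp only [hM, hf, hg, Pi.smul_apply, smul_eq_mul, Matrix.cons_val_zero, Matrix.cons_val_one, Matrix.head_cons, Matrix.cons_val_two, Matrix.tail_cons, Matrix.cons_val_three]
    ring
  have t0 : fderiv ℝ (fun y => M y 0) x (Pi.single 0 1)
      = (x 0 ^ 2 + x 1 ^ 2 + x 2 ^ 2 + x 3 ^ 2)⁻¹ ^ 3 * (-1 + (x 0 ^ 2 + x 1 ^ 2 + x 2 ^ 2 + x 3 ^ 2) + 2 * x 0 * x 0)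
        - 6 * (x 0 ^ 2 + x 1 ^ 2 + x 2 ^ 2 + x 3 ^ 2)⁻¹ ^ 4 * x 0 * (-x 0 - x 1 + x 0 * (x 0 ^ 2 + x 1 ^ 2 + x 2 ^ 2 + x 3 ^ 2)) := by
    erw [e0, hF0.fderiv, p0]
    simp only [ContinuousLinearMap.add_apply, ContinuousLinearMap.smul_apply,
      ContinuousLinearMap.sub_apply, ContinuousLinearMap.neg_apply,
      ContinuousLinearMap.coe_comp', Function.comp_apply,
      ContinuousLinearMap.mulLeftRight_apply,
      ContinuousLinearMap.proj_apply, smul_eq_mul, Matrix.cons_val_zero,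
      Pi.mul_apply, Pi.add_apply, Pi.sub_apply, Pi.neg_apply,
      Matrix.cons_val_one, Matrix.head_cons, Matrix.cons_val_two, Matrix.tail_cons,
      Matrix.cons_val_three]
    ring
  have t1 : fderiv ℝ (fun y => M y 1) x (Pi.single 1 1)
      = (x 0 ^ 2 + x 1 ^ 2 + x 2 ^ 2 + x 3 ^ 2)⁻¹ ^ 3 * (-1 + (x 0 ^ 2 + x 1 ^ 2 + x 2 ^ 2 + x 3 ^ 2) + 2 * x 1 * x 1)
        - 6 * (x 0 ^ 2 + x 1 ^ 2 + x 2 ^ 2 + x 3 ^ 2)⁻¹ ^ 4 * x 1 * (x 0 - x 1 + x 1 * (x 0 ^ 2 + x 1 ^ 2 + x 2 ^ 2 + x 3 ^ 2)) := by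
    erw [e1, hF1.fderiv, p1]
    simp only [ContinuousLinearMap.add_apply, ContinuousLinearMap.smul_apply,
      ContinuousLinearMap.sub_apply, ContinuousLinearMap.neg_apply,
      ContinuousLinearMap.coe_comp', Function.comp_apply,
      ContinuousLinearMap.mulLeftRight_apply,
      ContinuousLinearMap.proj_apply, smul_eq_mul, Matrix.cons_val_zero,
      Pi.mul_apply, Pi.add_apply, Pi.sub_apply, Pi.neg_apply,
      Matrix.cons_val_one, Matrix.head_cons, Matrix.cons_val_two, Matrix.tail_cons,
      Matrix.cons_val_three]
    ring
  have t2 : fderiv ℝ (fun y => M y 2) x (Pi.single 2 1)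
      = (x 0 ^ 2 + x 1 ^ 2 + x 2 ^ 2 + x 3 ^ 2)⁻¹ ^ 3 * (-1 + (x 0 ^ 2 + x 1 ^ 2 + x 2 ^ 2 + x 3 ^ 2) + 2 * x 2 * x 2)
        - 6 * (x 0 ^ 2 + x 1 ^ 2 + x 2 ^ 2 + x 3 ^ 2)⁻¹ ^ 4 * x 2 * (-x 2 - x 3 + x 2 * (x 0 ^ 2 + x 1 ^ 2 + x 2 ^ 2 + x 3 ^ 2)) := by
    erw [e2, hF2.fderiv, p2]
    simp only [ContinuousLinearMap.add_apply, ContinuousLinearMap.smul_apply,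
      ContinuousLinearMap.sub_apply, ContinuousLinearMap.neg_apply,
      ContinuousLinearMap.coe_comp', Function.comp_apply,
      ContinuousLinearMap.mulLeftRight_apply,
      ContinuousLinearMap.proj_apply, smul_eq_mul, Matrix.cons_val_zero,
      Pi.mul_apply, Pi.add_apply, Pi.sub_apply, Pi.neg_apply,
      Matrix.cons_val_one, Matrix.head_cons, Matrix.cons_val_two, Matrix.tail_cons,
      Matrix.cons_val_three]
    ring
  have t3 : fderiv ℝ (fun y => M y 3) x (Pi.single 3 1)
      = (x 0 ^ 2 + x 1 ^ 2 + x 2 ^ 2 + x 3 ^ 2)⁻¹ ^ 3 * (-1 + (x 0 ^ 2 + x 1 ^ 2 + x 2 ^ 2 + x 3 ^ 2) + 2 * x 3 * x 3)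
        - 6 * (x 0 ^ 2 + x 1 ^ 2 + x 2 ^ 2 + x 3 ^ 2)⁻¹ ^ 4 * x 3 * (x 2 - x 3 + x 3 * (x 0 ^ 2 + x 1 ^ 2 + x 2 ^ 2 + x 3 ^ 2)) := by
    erw [e3, hF3.fderiv, p3]
    simp only [ContinuousLinearMap.add_apply, ContinuousLinearMap.smul_apply,
      ContinuousLinearMap.sub_apply, ContinuousLinearMap.neg_apply,
      ContinuousLinearMap.coe_comp', Function.comp_apply,
      ContinuousLinearMap.mulLeftRight_apply,
      ContinuousLinearMap.proj_apply, smul_eq_mul, Matrix.cons_val_zero,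
      Pi.mul_apply, Pi.add_apply, Pi.sub_apply, Pi.neg_apply,
      Matrix.cons_val_one, Matrix.head_cons, Matrix.cons_val_two, Matrix.tail_cons,
      Matrix.cons_val_three]
    ring
  have hSu : (x 0 ^ 2 + x 1 ^ 2 + x 2 ^ 2 + x 3 ^ 2) * (x 0 ^ 2 + x 1 ^ 2 + x 2 ^ 2 + x 3 ^ 2)⁻¹ = 1 := mul_inv_cancel₀ hSne
  have key : (∑ i, fderiv ℝ (fun y => M y i) x (Pi.single i 1))
      = 2 / (x 0 ^ 2 + x 1 ^ 2 + x 2 ^ 2 + x 3 ^ 2) ^ 3 := by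
    rw [Fin.sum_univ_four, t0, t1, t2, t3, div_eq_mul_inv, ← inv_pow]
    linear_combination (6 * (x 0 ^ 2 + x 1 ^ 2 + x 2 ^ 2 + x 3 ^ 2)⁻¹ ^ 3 - 6 * (x 0 ^ 2 + x 1 ^ 2 + x 2 ^ 2 + x 3 ^ 2)⁻¹ ^ 3 * (x 0 ^ 2 + x 1 ^ 2 + x 2 ^ 2 + x 3 ^ 2)) * hSu
  refine ⟨key, ?_⟩
  rw [key]; positivity
end

section
/- Let g(x) = x₁² + x₂² + x₃² + x₄² on ℝ⁴. The vector field V(x) = g(x)^{−3} (−x₁ − x₂ + x₁g(x), x₁ − x₂ + x₂g(x), −x₃ − x₄ + x₃g(x), x₃ − x₄ + x₄g(x)) on G' = ℝ⁴ ∖ {0} satisfies div V(x) = 2 g(x)^{−3} > 0 for all x ∈ G'. -/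
/-- The vector field V = g⁻³·f on ℝ⁴ ∖ {0} has divergence 2·g⁻³ > 0. -/
theorem example_2_4_divergence
    (g : (Fin 4 → ℝ) → ℝ) (hg : g = fun x => x 0 ^ 2 + x 1 ^ 2 + x 2 ^ 2 + x 3 ^ 2)
    (V : (Fin 4 → ℝ) → (Fin 4 → ℝ))
    (hV : ∀ x, V x = (g x)⁻¹ ^ 3 • ![ -x 0 - x 1 + x 0 * g x,
                                      x 0 - x 1 + x 1 * g x,
                                      -x 2 - x 3 + x 2 * g x,
                                      x 2 - x 3 + x 3 * g x ]) :
    ∀ x : Fin 4 → ℝ, x ≠ 0 →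
      (∑ i, fderiv ℝ (fun y => V y i) x (Pi.single i 1)) = 2 * (g x)⁻¹ ^ 3 ∧
      0 < ∑ i, fderiv ℝ (fun y => V y i) x (Pi.single i 1) := by
  intro x hx
  -- g x > 0
  have hgpos : 0 < g x := by
    rw [hg]
    show 0 < x 0 ^ 2 + x 1 ^ 2 + x 2 ^ 2 + x 3 ^ 2
    obtain ⟨j, hj⟩ := Function.ne_iff.mp hx
    have hj0 : x j ≠ 0 := by simpa using hj
    have hj' : (0:ℝ) < x j ^ 2 := by positivity
    fin_cases j <;> simp only [Fin.zero_eta, Fin.mk_one, Fin.reduceFinMk, Fin.isValue] at hj' <;>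
      nlinarith [sq_nonneg (x 0), sq_nonneg (x 1), sq_nonneg (x 2), sq_nonneg (x 3)]
  have hgne : g x ≠ 0 := ne_of_gt hgpos
  -- projections
  set P : Fin 4 → ((Fin 4 → ℝ) →L[ℝ] ℝ) :=
    fun j => ContinuousLinearMap.proj j with hP
  have hPd : ∀ j, HasFDerivAt (fun y : Fin 4 → ℝ => y j) (P j) x :=
    fun j => (P j).hasFDerivAt
  -- derivative of g
  set L : (Fin 4 → ℝ) →L[ℝ] ℝ :=
    (2 * x 0) • P 0 + (2 * x 1) • P 1 + (2 * x 2) • P 2 + (2 * x 3) • P 3 with hL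
  have hsq : ∀ j, HasFDerivAt (fun y : Fin 4 → ℝ => y j ^ 2) ((2 * x j) • P j) x := by
    intro j
    have := (hasDerivAt_pow 2 (x j)).comp_hasFDerivAt x (hPd j)
    simpa [Function.comp_def] using this
  have hgd : HasFDerivAt g L x := by
    rw [hg, hL]
    exact (((hsq 0).add (hsq 1)).add (hsq 2)).add (hsq 3)
  -- derivative of u = g⁻¹ ^ 3
  set Du' : (Fin 4 → ℝ) →L[ℝ] ℝ :=
    ((3:ℝ) * ((g x)⁻¹) ^ 2 * (-(g x ^ 2)⁻¹)) • L with hDu'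
  have hu : HasFDerivAt (fun y => (g y)⁻¹ ^ 3) Du' x := by
    have h1 : HasDerivAt (fun t : ℝ => t⁻¹ ^ 3)
        ((3:ℝ) * ((g x)⁻¹) ^ 2 * (-(g x ^ 2)⁻¹)) (g x) := by
      simpa [Pi.pow_def] using (hasDerivAt_inv hgne).pow 3
    exact h1.comp_hasFDerivAt x hgd
  -- the four components
  have hq0 : HasFDerivAt (fun y : Fin 4 → ℝ => -y 0 - y 1 + y 0 * g y)
      (((-P 0) - P 1) + (x 0 • L + g x • P 0)) x :=
    (((hPd 0).neg.sub (hPd 1)).add ((hPd 0).mul hgd))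
  have hq1 : HasFDerivAt (fun y : Fin 4 → ℝ => y 0 - y 1 + y 1 * g y)
      ((P 0 - P 1) + (x 1 • L + g x • P 1)) x :=
    (((hPd 0).sub (hPd 1)).add ((hPd 1).mul hgd))
  have hq2 : HasFDerivAt (fun y : Fin 4 → ℝ => -y 2 - y 3 + y 2 * g y)
      (((-P 2) - P 3) + (x 2 • L + g x • P 2)) x :=
    (((hPd 2).neg.sub (hPd 3)).add ((hPd 2).mul hgd))
  have hq3 : HasFDerivAt (fun y : Fin 4 → ℝ => y 2 - y 3 + y 3 * g y)
      ((P 2 - P 3) + (x 3 • L + g x • P 3)) x :=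
    (((hPd 2).sub (hPd 3)).add ((hPd 3).mul hgd))
  -- components of V
  have hV0 : (fun y => V y 0) = fun y => (g y)⁻¹ ^ 3 * (-y 0 - y 1 + y 0 * g y) := by
    funext y; simp [hV]
  have hV1 : (fun y => V y 1) = fun y => (g y)⁻¹ ^ 3 * (y 0 - y 1 + y 1 * g y) := by
    funext y; simp [hV]
  have hV2 : (fun y => V y 2) = fun y => (g y)⁻¹ ^ 3 * (-y 2 - y 3 + y 2 * g y) := by
    funext y; simp [hV]
  have hV3 : (fun y => V y 3) = fun y => (g y)⁻¹ ^ 3 * (y 2 - y 3 + y 3 * g y) := by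
    funext y; simp [hV]
  have hd0 := (hu.mul hq0).fderiv
  simp only [Pi.mul_def] at hd0
  have hd1 := (hu.mul hq1).fderiv
  simp only [Pi.mul_def] at hd1
  have hd2 := (hu.mul hq2).fderiv
  simp only [Pi.mul_def] at hd2
  have hd3 := (hu.mul hq3).fderiv
  simp only [Pi.mul_def] at hd3
  have key : (∑ i, fderiv ℝ (fun y => V y i) x (Pi.single i 1)) = 2 * (g x)⁻¹ ^ 3 := by
    rw [Fin.sum_univ_four, hV0, hV1, hV2, hV3, hd0, hd1, hd2, hd3]
    have hGx : g x = x 0 ^ 2 + x 1 ^ 2 + x 2 ^ 2 + x 3 ^ 2 := by rw [hg]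
    have e0 : ∀ (i j : Fin 4), (Pi.single i 1 : Fin 4 → ℝ) j = if j = i then 1 else 0 := by
      intro i j; rw [Pi.single_apply]
    simp only [ContinuousLinearMap.add_apply, ContinuousLinearMap.sub_apply,
      ContinuousLinearMap.neg_apply, ContinuousLinearMap.smul_apply,
      ContinuousLinearMap.proj_apply, hP, hDu', hL, smul_eq_mul, e0,
      Fin.reduceEq, reduceIte, mul_one, mul_zero, add_zero, zero_add, mul_neg, neg_mul, if_true]
    have h1 : g x * (g x)⁻¹ = 1 := mul_inv_cancel₀ hgne
    have hS : x 0 * (-x 0 - x 1 + x 0 * g x) + x 1 * (x 0 - x 1 + x 1 * g x)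
        + x 2 * (-x 2 - x 3 + x 2 * g x) + x 3 * (x 2 - x 3 + x 3 * g x)
        = g x ^ 2 - g x := by rw [hGx]; ring
    linear_combination (-6 * (g x)⁻¹ ^ 4) * hS
      + (6 * (g x)⁻¹ ^ 3 - 6 * (g x)⁻¹ ^ 3 * g x) * h1
      - (2 * (g x)⁻¹ ^ 3) * hGx
  exact ⟨key, by rw [key]; positivity⟩
end

section
/- Let g(x) = x₁² + x₂² + x₃² on ℝ³, n ∈ ℕ, and P(x) = ∏_{k=0}^{n} (g(x) − 2k)(g(x) − 2k − 1). For the vector field f(x) = (x₃ ∏_{k=0}^{n}(g(x) − 2k), x₃ + x₂ P(x), −x₂ − x₁ ∏_{k=0}^{n}(g(x) − 2k)), the derivative of g along f equals 2 x₂² P(x) for all x ∈ ℝ³. Consequently, for each m = 1, …, 2n+1 the sphere {x : g(x) = m} is invariant under the flow of x' = f(x). -/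
/-- For g(x) = x₁²+x₂²+x₃², P(x) = ∏ₖ(g−2k)(g−2k−1) and the vector field f of
Example 2.7, the derivative of g along f equals 2x₂²P(x); consequently each sphere
{g = m}, m = 1,…,2n+1, is invariant under the flow of x' = f(x). -/
theorem example_2_7_spheres_invariant
    (n : ℕ)
    (g : (Fin 3 → ℝ) → ℝ) (hg : g = fun x => x 0 ^ 2 + x 1 ^ 2 + x 2 ^ 2)
    (Q P : (Fin 3 → ℝ) → ℝ)
    (hQ : Q = fun x => ∏ k ∈ Finset.range (n + 1), (g x - 2 * k))
    (hP : P = fun x => ∏ k ∈ Finset.range (n + 1), (g x - 2 * k) * (g x - 2 * k - 1))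
    (f : (Fin 3 → ℝ) → (Fin 3 → ℝ))
    (hf : ∀ x, f x = ![ x 2 * Q x,
                        x 2 + x 1 * P x,
                        -x 1 - x 0 * Q x ]) :
    (∀ x : Fin 3 → ℝ, 2 * x 0 * f x 0 + 2 * x 1 * f x 1 + 2 * x 2 * f x 2
        = 2 * x 1 ^ 2 * P x) ∧
    (∀ m : ℕ, 1 ≤ m → m ≤ 2 * n + 1 →
      ∀ x : ℝ → (Fin 3 → ℝ), (∀ t, HasDerivAt x (f (x t)) t) →
        g (x 0) = m → ∀ t, g (x t) = m) := by
  have hgc : Continuous g := by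
    rw [hg]; fun_prop
  have key : ∀ x : Fin 3 → ℝ, 2 * x 0 * f x 0 + 2 * x 1 * f x 1 + 2 * x 2 * f x 2
      = 2 * x 1 ^ 2 * P x := by
    intro x
    rw [hf x]
    simp only [Matrix.cons_val_zero, Matrix.cons_val_one, Matrix.head_cons,
      Matrix.cons_val_two, Matrix.tail_cons]
    ring
  refine ⟨key, ?_⟩
  intro m hm1 hm2 x hx hx0
  -- factor P x = S x * (g x - m) for a continuous S
  obtain ⟨S, hScont, hSeq⟩ : ∃ S : (Fin 3 → ℝ) → ℝ, Continuous S ∧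
      ∀ y, 2 * y 1 ^ 2 * P y = S y * (g y - (m : ℝ)) := by
    set k₀ := m / 2 with hk₀
    have hk₀mem : k₀ ∈ Finset.range (n + 1) := by
      refine Finset.mem_range.mpr ?_
      omega
    have hprod : ∀ y, P y =
        ((g y - 2 * k₀) * (g y - 2 * k₀ - 1)) *
          ∏ k ∈ (Finset.range (n + 1)).erase k₀, (g y - 2 * k) * (g y - 2 * k - 1) := by
      intro y
      rw [hP]
      exact (Finset.mul_prod_erase _ _ hk₀mem).symm
    have hRcont : Continuous (fun y =>
        ∏ k ∈ (Finset.range (n + 1)).erase k₀, (g y - 2 * k) * (g y - 2 * k - 1)) := by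
      apply continuous_finset_prod
      intro k _
      fun_prop
    rcases Nat.even_or_odd m with he | ho
    · -- m = 2 k₀
      have hm : (m : ℝ) = 2 * k₀ := by
        obtain ⟨j, hj⟩ := he
        have : m = 2 * k₀ := by omega
        push_cast [this]; ring
      refine ⟨fun y => 2 * y 1 ^ 2 * ((g y - 2 * k₀ - 1) *
          ∏ k ∈ (Finset.range (n + 1)).erase k₀, (g y - 2 * k) * (g y - 2 * k - 1)),
        by fun_prop, ?_⟩
      intro y
      rw [hprod y, hm]
      ring
    · -- m = 2 k₀ + 1
      have hm : (m : ℝ) = 2 * k₀ + 1 := by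
        obtain ⟨j, hj⟩ := ho
        have : m = 2 * k₀ + 1 := by omega
        push_cast [this]; ring
      refine ⟨fun y => 2 * y 1 ^ 2 * ((g y - 2 * k₀) *
          ∏ k ∈ (Finset.range (n + 1)).erase k₀, (g y - 2 * k) * (g y - 2 * k - 1)),
        by fun_prop, ?_⟩
      intro y
      rw [hprod y, hm]
      ring
  -- component derivatives
  have hxi : ∀ (i : Fin 3) t, HasDerivAt (fun t => x t i) (f (x t) i) t :=
    fun i t => (hasDerivAt_pi.mp (hx t)) i
  -- derivative of h t = g (x t) - m
  have hh : ∀ t, HasDerivAt (fun t => g (x t) - (m : ℝ))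
      (S (x t) * (g (x t) - (m : ℝ))) t := by
    intro t
    have h0 := ((hxi 0 t).pow 2).add (((hxi 1 t).pow 2).add ((hxi 2 t).pow 2))
    have h1 : HasDerivAt (fun t => g (x t) - (m : ℝ))
        (((2:ℕ) * x t 0 ^ 1 * f (x t) 0) + (((2:ℕ) * x t 1 ^ 1 * f (x t) 1)
          + ((2:ℕ) * x t 2 ^ 1 * f (x t) 2))) t := by
      have := h0.sub_const (m : ℝ)
      simp only [hg] at this ⊢
      have e : (fun t => x t 0 ^ 2 + x t 1 ^ 2 + x t 2 ^ 2 - (m : ℝ)) =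
          fun s => ((fun t => x t 0) ^ 2 + ((fun t => x t 1) ^ 2 + (fun t => x t 2) ^ 2)) s
            - (m : ℝ) := by
        funext s; simp only [Pi.add_apply, Pi.pow_apply]; ring
      rw [e]
      refine this.congr_deriv ?_
      norm_num
    convert h1 using 1
    have := key (x t)
    rw [← hSeq (x t)]
    push_cast
    linarith [key (x t)]
  -- continuity of t ↦ S (x t)
  have hxc : Continuous x := by
    rw [continuous_iff_continuousAt]
    exact fun t => (hx t).continuousAt
  have hc : Continuous (fun t => S (x t)) := hScont.comp hxc
  -- antiderivative of c
  set C : ℝ → ℝ := fun t => ∫ s in (0:ℝ)..t, S (x s) with hC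
  have hCd : ∀ t, HasDerivAt C (S (x t)) t := by
    intro t
    exact intervalIntegral.integral_hasDerivAt_right (hc.intervalIntegrable 0 t)
      (hc.stronglyMeasurableAtFilter _ _) hc.continuousAt
  -- F = h * exp (-C) has zero derivative
  set F : ℝ → ℝ := fun t => (g (x t) - (m : ℝ)) * Real.exp (-C t) with hF
  have hFd : ∀ t, HasDerivAt F 0 t := by
    intro t
    have := (hh t).mul ((hCd t).neg.exp)
    exact this.congr_deriv (by ring)
  have hFconst : ∀ t, F t = F 0 :=
    fun t => is_const_of_deriv_eq_zero (fun s => (hFd s).differentiableAt)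
      (fun s => (hFd s).deriv) t 0
  intro t
  have hFt := hFconst t
  have hF0 : F 0 = 0 := by
    simp [hF, hx0]
  rw [hF0] at hFt
  have : g (x t) - (m : ℝ) = 0 := by
    have hexp : Real.exp (-C t) ≠ 0 := Real.exp_ne_zero _
    rcases mul_eq_zero.mp hFt with h | h
    · exact h
    · exact absurd h hexp
  linarith
end

section
/- Let g(x) = x₁² + x₂² + x₃² on ℝ³ and consider the vector field X¹(x) = (−x₁ + x₂ + x₁g(x), −x₁ − x₂ + x₂g(x), −x₃ + x₃g(x)). With φ(x) = g(x)^{−5/2} on ℝ³ ∖ {0}, the divergence of Z₁(x) = φ(x)X¹(x) is strictly positive for all x ∈ ℝ³ ∖ {0}. -/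
/-- With g(x) = x₁²+x₂²+x₃², X¹(x) = (−x₁+x₂+x₁g, −x₁−x₂+x₂g, −x₃+x₃g) and
φ = g^(−5/2), the divergence of Z₁ = φ·X¹ is strictly positive on ℝ³ ∖ {0}. -/
theorem example_2_9_divergence_positive
    (g : (Fin 3 → ℝ) → ℝ) (hg : g = fun x => x 0 ^ 2 + x 1 ^ 2 + x 2 ^ 2)
    (X1 : (Fin 3 → ℝ) → (Fin 3 → ℝ))
    (hX1 : ∀ x, X1 x = ![ -x 0 + x 1 + x 0 * g x,
                          -x 0 - x 1 + x 1 * g x,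
                          -x 2 + x 2 * g x ])
    (φ : (Fin 3 → ℝ) → ℝ) (hφ : φ = fun x => (g x) ^ (-(5 : ℝ) / 2)) :
    ∀ x : Fin 3 → ℝ, x ≠ 0 →
      0 < ∑ i, fderiv ℝ (fun y => φ y * X1 y i) x (Pi.single i 1) := by
  intro x hx
  subst hg hφ
  have hgx : (0:ℝ) < x 0 ^ 2 + x 1 ^ 2 + x 2 ^ 2 := by
    rcases (by positivity : (0:ℝ) ≤ x 0 ^ 2 + x 1 ^ 2 + x 2 ^ 2).lt_or_eq with h | h
    · exact h
    · exfalso; apply hx; funext i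
      fin_cases i <;> simp <;>
        nlinarith [sq_nonneg (x 0), sq_nonneg (x 1), sq_nonneg (x 2)]
  have hP : ∀ j : Fin 3, HasFDerivAt (fun y : Fin 3 → ℝ => y j)
      (ContinuousLinearMap.proj j : (Fin 3 → ℝ) →L[ℝ] ℝ) x := fun j =>
    hasFDerivAt_apply j x
  have hgd := (((hP 0).mul (hP 0)).add ((hP 1).mul (hP 1))).add ((hP 2).mul (hP 2))
  have hφd := hgd.rpow_const (p := -(5:ℝ)/2) (Or.inl (by nlinarith : x 0 * x 0 + x 1 * x 1 + x 2 * x 2 ≠ 0))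
  have h0 := hφd.mul (((hP 0).neg.add (hP 1)).add ((hP 0).mul hgd))
  have h1 := hφd.mul (((hP 0).neg.sub (hP 1)).add ((hP 1).mul hgd))
  have h2 := hφd.mul ((hP 2).neg.add ((hP 2).mul hgd))
  rw [Fin.sum_univ_three]
  simp only [hX1, Matrix.cons_val_zero, Matrix.cons_val_one, Matrix.head_cons,
    Matrix.cons_val_two, Matrix.tail_cons, pow_two]
  erw [h0.fderiv, h1.fderiv, h2.fderiv]
  simp only [ContinuousLinearMap.add_apply, ContinuousLinearMap.smul_apply,
    ContinuousLinearMap.neg_apply, ContinuousLinearMap.sub_apply,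
    ContinuousLinearMap.proj_apply, smul_eq_mul, Pi.mul_apply, Pi.add_apply, Pi.neg_apply,
    Pi.sub_apply]
  norm_num [Pi.single_apply, Fin.ext_iff]
  have hspos : (0:ℝ) < x 0 * x 0 + x 1 * x 1 + x 2 * x 2 := by nlinarith
  have hBA : (x 0 * x 0 + x 1 * x 1 + x 2 * x 2) ^ ((-(7/2)) : ℝ) *
      (x 0 * x 0 + x 1 * x 1 + x 2 * x 2) =
      (x 0 * x 0 + x 1 * x 1 + x 2 * x 2) ^ ((-(5/2)) : ℝ) := by
    rw [← Real.rpow_add_one (ne_of_gt hspos)]; norm_num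
  have hA : (0:ℝ) < (x 0 * x 0 + x 1 * x 1 + x 2 * x 2) ^ ((-(5/2)) : ℝ) :=
    Real.rpow_pos_of_pos hspos _
  nlinarith [hBA, hA]
end
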